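/- The number of decreasing weighted subexcedent functions of size n is n!. -/

import Mathlib

open scoped Classical
noncomputable section

/-- A subexcedent function of size `n`: `u j ≤ n - j` for `j ∈ [1,n]`, `u` vanishing
outside of `[1,n]`. -/
def IsSubexc (n : ℕ) (u : ℕ → ℕ) : Prop :=
  (∀ j, 1 ≤ j → j ≤ n → u j ≤ n - j) ∧ ∀ j, j = 0 ∨ n < j → u j = 0
/-- A subexcedent function is decreasing if its nonzero values decrease strictly. -/
def IsDecr (n : ℕ) (u : ℕ → ℕ) : Prop :=
  ∀ i j, 1 ≤ i → i < j → j ≤ n → 0 < u i → 0 < u j → u j < u i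
/-- Maximal allowed weight at position `k` for a decreasing subexcedent function `u`:
the number of positions `i < k` with `0 < u i ≤ n - k`. -/
def maxW (n : ℕ) (u : ℕ → ℕ) (k : ℕ) : ℕ :=
  ((Finset.Ico 1 k).filter (fun i => 0 < u i ∧ u i ≤ n - k)).card
/-- A valid weight for a decreasing subexcedent function. -/
def IsValidW (n : ℕ) (u w : ℕ → ℕ) : Prop :=
  (∀ k, 1 ≤ k → k ≤ n → w k ≤ maxW n u k) ∧ ∀ k, k = 0 ∨ n < k → w k = 0

/-! ### Auxiliary development: generalized DWSFs with `h` open entries -/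

/-- Generalized weight cap: open entries (value `n+1`) always count. -/
def cap (n : ℕ) (u : ℕ → ℕ) (k : ℕ) : ℕ :=
  ((Finset.Ico 1 k).filter (fun i => 0 < u i ∧ (u i ≤ n - k ∨ u i = n + 1))).card

/-- Generalized decreasing weighted subexcedent function with `h` "open" entries
(encoded as value `n+1`, all positioned after the closed nonzero entries). -/
structure IsD (n h : ℕ) (u w : ℕ → ℕ) : Prop where
  uzero : ∀ i, i = 0 ∨ n < i → u i = 0
  bound : ∀ i, 1 ≤ i → i ≤ n → u i ≤ n - i ∨ u i = n + 1
  opens : ((Finset.Icc 1 n).filter fun i => u i = n + 1).card = h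
  decr : ∀ i j, i < j → 0 < u i → u i ≤ n - i → 0 < u j → u j ≤ n - j → u j < u i
  before : ∀ i j, 0 < u i → u i ≤ n - i → u j = n + 1 → i < j
  wle : ∀ k, 1 ≤ k → k ≤ n → w k ≤ cap n u k
  wzero : ∀ k, k = 0 ∨ n < k → w k = 0

/-- The type of generalized DWSFs. -/
def Dset (n h : ℕ) : Type :=
  {p : (ℕ → ℕ) × (ℕ → ℕ) // IsD n h p.1 p.2}

lemma cap_le (n : ℕ) (u : ℕ → ℕ) (k : ℕ) : cap n u k ≤ k - 1 := by
  have h1 := Finset.card_filter_le (Finset.Ico 1 k)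
    (fun i => 0 < u i ∧ (u i ≤ n - k ∨ u i = n + 1))
  simpa [cap, Nat.card_Ico] using h1

lemma cap_eq_maxW (n : ℕ) (u : ℕ → ℕ) (k : ℕ) (hk : k ≤ n)
    (hno : ∀ i, 1 ≤ i → i ≤ n → u i ≠ n + 1) : cap n u k = maxW n u k := by
  unfold cap maxW
  apply congrArg Finset.card
  apply Finset.filter_congr
  intro i hi
  simp only [Finset.mem_Ico] at hi
  have h2 := hno i hi.1 (by omega)
  constructor
  · rintro ⟨ha, hb | hb⟩
    · exact ⟨ha, hb⟩
    · exact absurd hb h2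
  · rintro ⟨ha, hb⟩
    exact ⟨ha, Or.inl hb⟩

instance DsetFinite (n h : ℕ) : Finite (Dset n h) := by
  have key : ∀ x : Dset n h, (∀ i, x.val.1 i < n + 2) ∧ (∀ i, x.val.2 i < n + 2) := by
    rintro ⟨⟨u, w⟩, hx⟩
    replace hx : IsD n h u w := hx
    constructor
    · intro i
      show u i < n + 2
      rcases Nat.eq_zero_or_pos i with h0 | h1
      · rw [hx.uzero i (Or.inl h0)]; omega
      rcases le_or_gt i n with hin | hni
      · rcases hx.bound i h1 hin with hb | hb <;> omega
      · rw [hx.uzero i (Or.inr hni)]; omega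
    · intro k
      show w k < n + 2
      rcases Nat.eq_zero_or_pos k with h0 | h1
      · rw [hx.wzero k (Or.inl h0)]; omega
      rcases le_or_gt k n with hin | hni
      · have h2 := hx.wle k h1 hin
        have h3 := cap_le n u k
        omega
      · rw [hx.wzero k (Or.inr hni)]; omega
  apply Finite.of_injective (fun x : Dset n h =>
    ((fun i : Fin (n+1) => (⟨x.val.1 i, (key x).1 i⟩ : Fin (n+2)),
      fun i : Fin (n+1) => (⟨x.val.2 i, (key x).2 i⟩ : Fin (n+2))) :
      (Fin (n+1) → Fin (n+2)) × (Fin (n+1) → Fin (n+2))))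
  rintro ⟨⟨u, w⟩, hx⟩ ⟨⟨u', w'⟩, hy⟩ heq
  replace hx : IsD n h u w := hx
  replace hy : IsD n h u' w' := hy
  simp only [Prod.mk.injEq] at heq
  obtain ⟨h1, h2⟩ := heq
  apply Subtype.ext
  have e1 : ∀ i, u i = u' i := by
    intro i
    rcases le_or_gt i n with hin | hni
    · have := congrFun h1 ⟨i, by omega⟩
      simpa [Fin.mk.injEq] using this
    · exact (hx.uzero i (Or.inr hni)).trans (hy.uzero i (Or.inr hni)).symm
  have e2 : ∀ k, w k = w' k := by
    intro k
    rcases le_or_gt k n with hin | hni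
    · have := congrFun h2 ⟨k, by omega⟩
      simpa [Fin.mk.injEq] using this
    · exact (hx.wzero k (Or.inr hni)).trans (hy.wzero k (Or.inr hni)).symm
  exact Prod.ext (funext e1) (funext e2)

lemma Dset_val_zero (h : ℕ) (x : Dset 0 h) : x.val = (fun _ => 0, fun _ => 0) := by
  obtain ⟨⟨u, w⟩, hx⟩ := x
  have e1 : ∀ i, u i = 0 := fun i => hx.uzero i (by omega)
  have e2 : ∀ k, w k = 0 := fun k => hx.wzero k (by omega)
  exact Prod.ext (funext e1) (funext e2)

lemma Dset_card_zero (h : ℕ) : Nat.card (Dset 0 h) = if h = 0 then 1 else 0 := by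
  rcases eq_or_ne h 0 with h0 | h0
  · subst h0
    rw [if_pos rfl]
    have hne : Nonempty (Dset 0 0) := by
      refine ⟨⟨(fun _ => 0, fun _ => 0), ?_⟩⟩
      constructor
      · intro i _; rfl
      · intro i hi hi2; omega
      · simp
      · intro i j _ hi; simp at hi
      · intro i j hi; simp at hi
      · intro k hk hk2; omega
      · intro k _; rfl
    have hsub : Subsingleton (Dset 0 0) := by
      constructor
      intro a b
      exact Subtype.ext ((Dset_val_zero 0 a).trans (Dset_val_zero 0 b).symm)
    exact Nat.card_eq_one_iff_unique.mpr ⟨hsub, hne⟩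
  · rw [if_neg h0]
    have hem : IsEmpty (Dset 0 h) := by
      constructor
      intro x
      have := x.prop.opens
      simp at this
      exact h0 this.symm
    exact Nat.card_of_isEmpty

/-! ### The recursion: strip the last position -/

/-- Strip the last step: closed values decrement; value-1 entries (closing at step `n+1`)
and old opens (value `n+2`) become opens (value `n+1`). -/
def stripU (n : ℕ) (u : ℕ → ℕ) : ℕ → ℕ := fun i =>
  if 1 ≤ i ∧ i ≤ n then (if u i = 1 ∨ u i = n + 2 then n + 1 else u i - 1) else 0

def stripW (n : ℕ) (w : ℕ → ℕ) : ℕ → ℕ := fun k => if k ≤ n then w k else 0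

/-- First open position. -/
def mo (n : ℕ) (u : ℕ → ℕ) : ℕ := (((Finset.Icc 1 n).filter fun i => u i = n + 1).min).untopD 0

/-- Reconstruction of the last step. -/
def recU (n : ℕ) (b c : Bool) (u' : ℕ → ℕ) : ℕ → ℕ := fun i =>
  if 1 ≤ i ∧ i ≤ n then
    (if u' i = n + 1 then (if c = true ∧ i = mo n u' then 1 else n + 2)
     else if u' i = 0 then 0 else u' i + 1)
  else if i = n + 1 ∧ b = true then n + 2 else 0

def recW (n : ℕ) (j : ℕ) (w' : ℕ → ℕ) : ℕ → ℕ := fun k =>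
  if k ≤ n then w' k else if k = n + 1 then j else 0

lemma mo_mem {n : ℕ} {u : ℕ → ℕ}
    (hne : (((Finset.Icc 1 n).filter fun i => u i = n + 1)).Nonempty) :
    mo n u ∈ (Finset.Icc 1 n).filter fun i => u i = n + 1 := by
  have h1 := Finset.min'_mem _ hne
  have h2 : mo n u = ((Finset.Icc 1 n).filter fun i => u i = n + 1).min' hne := by
    unfold mo
    rw [← Finset.coe_min' hne]
    rfl
  rw [h2]
  exact h1

lemma mo_min {n : ℕ} {u : ℕ → ℕ}
    (hne : (((Finset.Icc 1 n).filter fun i => u i = n + 1)).Nonempty)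
    {a : ℕ} (ha : a ∈ (Finset.Icc 1 n).filter fun i => u i = n + 1) :
    mo n u ≤ a := by
  have h2 : mo n u = ((Finset.Icc 1 n).filter fun i => u i = n + 1).min' hne := by
    unfold mo
    rw [← Finset.coe_min' hne]
    rfl
  rw [h2]
  exact Finset.min'_le _ a ha

/-- Transport of weight caps between a size-`n+1` object and its strip. -/
lemma cap_transport (n k : ℕ) (hk1 : 1 ≤ k) (hk2 : k ≤ n) (u u' : ℕ → ℕ)
    (hrel : ∀ i, 1 ≤ i → i < k →
      ((u' i = n + 1 ↔ (u i = 1 ∨ u i = n + 2)) ∧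
       (u' i ≠ n + 1 → (u i = u' i + 1 ∨ (u i = 0 ∧ u' i = 0))))) :
    cap n u' k = cap (n + 1) u k := by
  unfold cap
  apply congrArg Finset.card
  apply Finset.filter_congr
  intro i hi
  simp only [Finset.mem_Ico] at hi
  have h1 := hrel i hi.1 hi.2
  omega

lemma Icc_succ_insert (n : ℕ) : Finset.Icc 1 (n+1) = insert (n+1) (Finset.Icc 1 n) := by
  ext i
  simp only [Finset.mem_Icc, Finset.mem_insert]
  omega

/-- Opens of `u` among `[1,n]`. -/
lemma opens_restrict (n h : ℕ) (u : ℕ → ℕ)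
    (hopens : ((Finset.Icc 1 (n+1)).filter fun i => u i = n + 2).card = h) :
    ((Finset.Icc 1 n).filter fun i => u i = n + 2).card
      = h - (if u (n+1) = n + 2 then 1 else 0)
    ∧ (u (n+1) = n + 2 → 1 ≤ h) := by
  rw [Icc_succ_insert, Finset.filter_insert] at hopens
  by_cases hb : u (n+1) = n + 2
  · rw [if_pos hb, Finset.card_insert_of_notMem (by simp)] at hopens
    rw [if_pos hb]
    omega
  · rw [if_neg hb] at hopens
    rw [if_neg hb]
    exact ⟨by omega, fun hcon => absurd hcon hb⟩

/-- The cap at the last position counts the opens among `[1,n]`. -/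
lemma cap_top (n h : ℕ) (u : ℕ → ℕ)
    (hopens : ((Finset.Icc 1 (n+1)).filter fun i => u i = n + 2).card = h) :
    cap (n+1) u (n+1) = h - (if u (n+1) = n + 2 then 1 else 0) := by
  have e1 : cap (n+1) u (n+1) = ((Finset.Icc 1 n).filter fun i => u i = n + 2).card := by
    unfold cap
    rw [Finset.Ico_add_one_right_eq_Icc]
    apply congrArg Finset.card
    apply Finset.filter_congr
    intro i hi
    simp only [Finset.mem_Icc] at hi
    omega
  rw [e1]
  exact (opens_restrict n h u hopens).1

lemma one_range (n h : ℕ) (u w : ℕ → ℕ) (hd : IsD (n+1) h u w) {i : ℕ} (hi : u i = 1) :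
    1 ≤ i ∧ i ≤ n := by
  have h1 : 1 ≤ i := by
    by_contra hcon
    have := hd.uzero i (by omega)
    omega
  have h2 : i ≤ n + 1 := by
    by_contra hcon
    have := hd.uzero i (by omega)
    omega
  rcases eq_or_lt_of_le h2 with heq | hlt
  · exfalso
    rcases hd.bound i h1 h2 with hb | hb <;> omega
  · exact ⟨h1, by omega⟩

lemma one_unique (n h : ℕ) (u w : ℕ → ℕ) (hd : IsD (n+1) h u w) {i j : ℕ}
    (hi : u i = 1) (hj : u j = 1) : i = j := by
  have hri := one_range n h u w hd hi
  have hrj := one_range n h u w hd hj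
  rcases lt_trichotomy i j with hlt | heq | hlt
  · have := hd.decr i j hlt (by omega) (by omega) (by omega) (by omega)
    omega
  · exact heq
  · have := hd.decr j i hlt (by omega) (by omega) (by omega) (by omega)
    omega

lemma strip_rel (n h : ℕ) (u w : ℕ → ℕ) (hd : IsD (n+1) h u w) :
    ∀ i, 1 ≤ i → i ≤ n →
      ((stripU n u i = n + 1 ↔ (u i = 1 ∨ u i = n + 2)) ∧
       (stripU n u i ≠ n + 1 → (u i = stripU n u i + 1 ∨ (u i = 0 ∧ stripU n u i = 0)))) := by
  intro i h1 h2
  have hbd : u i ≤ n + 1 - i ∨ u i = n + 2 := hd.bound i h1 (by omega)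
  unfold stripU
  rw [if_pos ⟨h1, h2⟩]
  by_cases hcase : u i = 1 ∨ u i = n + 2
  · rw [if_pos hcase]
    constructor
    · exact ⟨fun _ => hcase, fun _ => rfl⟩
    · intro hcon; exact absurd rfl hcon
  · rw [if_neg hcase]
    omega

lemma strip_mem (n h : ℕ) (b c : Bool) (u w : ℕ → ℕ) (hd : IsD (n+1) h u w)
    (hb : (u (n+1) = n + 2) ↔ b = true) (hc : (∃ i, u i = 1) ↔ c = true) :
    IsD n (h + (if c then 1 else 0) - (if b then 1 else 0)) (stripU n u) (stripW n w) := by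
  have hn2 : n + 1 + 1 = n + 2 := rfl
  have hops := opens_restrict n h u (hn2 ▸ hd.opens)
  have hrel := strip_rel n h u w hd
  have hclosed : ∀ i, 0 < stripU n u i → stripU n u i ≤ n - i →
      1 ≤ i ∧ i ≤ n ∧ 2 ≤ u i ∧ u i ≠ n + 2 ∧ u i ≤ n + 1 - i ∧ stripU n u i = u i - 1 := by
    intro i hpos hle
    by_cases hg : 1 ≤ i ∧ i ≤ n
    · have h3 := hrel i hg.1 hg.2
      have hne : stripU n u i ≠ n + 1 := by omega
      have h4 := h3.2 hne
      have hbd : u i ≤ n + 1 - i ∨ u i = n + 2 := hd.bound i hg.1 (by omega)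
      have hu2 : u i ≠ n + 2 := by
        intro hcon
        exact hne ((h3.1.mpr (Or.inr hcon)))
      refine ⟨hg.1, hg.2, by omega, hu2, by omega, by omega⟩
    · exfalso
      have : stripU n u i = 0 := by unfold stripU; rw [if_neg hg]
      omega
  constructor
  · -- uzero
    intro i hi
    unfold stripU
    rw [if_neg (by omega)]
  · -- bound
    intro i h1 h2
    have h3 := hrel i h1 h2
    by_cases hcase : stripU n u i = n + 1
    · exact Or.inr hcase
    · have h4 := h3.2 hcase
      have hbd : u i ≤ n + 1 - i ∨ u i = n + 2 := hd.bound i h1 (by omega)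
      have : u i ≠ n + 2 := fun hcon => hcase (h3.1.mpr (Or.inr hcon))
      left; omega
  · -- opens count
    have hcongr : ((Finset.Icc 1 n).filter fun i => stripU n u i = n + 1)
        = (Finset.Icc 1 n).filter fun i => (u i = 1 ∨ u i = n + 2) := by
      apply Finset.filter_congr
      intro i hi
      simp only [Finset.mem_Icc] at hi
      exact (hrel i hi.1 hi.2).1
    rw [hcongr, Finset.filter_or, Finset.card_union_of_disjoint]
    swap
    · rw [Finset.disjoint_filter]
      intro i _ h1 h2
      omega
    have hones : ((Finset.Icc 1 n).filter fun i => u i = 1).card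
        = (if c then 1 else 0) := by
      by_cases hcc : c = true
      · rw [if_pos hcc]
        obtain ⟨p, hp⟩ := hc.mpr hcc
        rw [Finset.card_eq_one]
        refine ⟨p, ?_⟩
        ext i
        simp only [Finset.mem_filter, Finset.mem_Icc, Finset.mem_singleton]
        constructor
        · rintro ⟨_, hi⟩
          exact one_unique n h u w hd hi hp
        · rintro rfl
          have := one_range n h u w hd hp
          exact ⟨this, hp⟩
      · rw [if_neg hcc]
        rw [Finset.card_eq_zero, Finset.filter_eq_empty_iff]
        intro i _
        intro hcon
        exact hcc (hc.mp ⟨i, hcon⟩)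
    have hbv : (if u (n+1) = n + 2 then 1 else 0) = (if b = true then 1 else 0) := by
      by_cases hx : u (n+1) = n + 2
      · rw [if_pos hx, if_pos (hb.mp hx)]
      · rw [if_neg hx, if_neg (fun hcon => hx (hb.mpr hcon))]
    have hbh2 : b = true → 1 ≤ h := fun hbb => hops.2 (hb.mpr hbb)
    rw [hones, hops.1, hbv]
    cases b with
    | true =>
        have h1h := hbh2 rfl
        cases c <;> simp <;> omega
    | false => cases c <;> simp <;> omega
  · -- decr
    intro i j hij h0i hbi h0j hbj
    obtain ⟨hi1, hi2, hi3, hi4, hi5, hi6⟩ := hclosed i h0i hbi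
    obtain ⟨hj1, hj2, hj3, hj4, hj5, hj6⟩ := hclosed j h0j hbj
    have := hd.decr i j hij (by omega) (by omega) (by omega) (by omega)
    omega
  · -- before
    intro i j h0i hbi hj
    obtain ⟨hi1, hi2, hi3, hi4, hi5, hi6⟩ := hclosed i h0i hbi
    have hjg : 1 ≤ j ∧ j ≤ n := by
      by_contra hcon
      have : stripU n u j = 0 := by unfold stripU; rw [if_neg hcon]
      omega
    have h3 := (hrel j hjg.1 hjg.2).1.mp hj
    rcases h3 with h3 | h3
    · -- u j = 1
      rcases lt_trichotomy i j with hlt | heq | hlt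
      · exact hlt
      · exfalso
        rw [heq] at hi3
        omega
      · exfalso
        have hj1' : u j = 1 := h3
        have e1 : 0 < u j := by omega
        have e2 : u j ≤ n + 1 - j := by omega
        have e3 : 0 < u i := by omega
        have e4 : u i ≤ n + 1 - i := by omega
        have := hd.decr j i hlt e1 e2 e3 e4
        omega
    · -- u j = n + 2
      have e3 : 0 < u i := by omega
      have e4 : u i ≤ n + 1 - i := by omega
      exact hd.before i j e3 e4 (by omega)
  · -- wle
    intro k h1 h2
    have hcap : cap n (stripU n u) k = cap (n+1) u k := by
      apply cap_transport n k h1 h2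
      intro i hi1 hi2
      exact hrel i hi1 (by omega)
    have : stripW n w k = w k := by unfold stripW; rw [if_pos h2]
    rw [this, hcap]
    exact hd.wle k h1 (by omega)
  · -- wzero
    intro k hk
    unfold stripW
    rcases hk with hk | hk
    · subst hk
      rw [if_pos (by omega)]
      exact hd.wzero 0 (Or.inl rfl)
    · rw [if_neg (by omega)]

lemma rec_rel (n : ℕ) (b c : Bool) (u' : ℕ → ℕ) :
    ∀ i, 1 ≤ i → i ≤ n →
      ((u' i = n + 1 ↔ (recU n b c u' i = 1 ∨ recU n b c u' i = n + 2)) ∧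
       (u' i ≠ n + 1 → (recU n b c u' i = u' i + 1 ∨ (recU n b c u' i = 0 ∧ u' i = 0)))) := by
  intro i h1 h2
  unfold recU
  rw [if_pos ⟨h1, h2⟩]
  by_cases hop : u' i = n + 1
  · rw [if_pos hop]
    by_cases hmo : c = true ∧ i = mo n u'
    · rw [if_pos hmo]
      exact ⟨⟨fun _ => Or.inl rfl, fun _ => hop⟩, fun hcon => absurd hop hcon⟩
    · rw [if_neg hmo]
      exact ⟨⟨fun _ => Or.inr rfl, fun _ => hop⟩, fun hcon => absurd hop hcon⟩
  · rw [if_neg hop]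
    by_cases hz : u' i = 0
    · rw [if_pos hz]
      exact ⟨⟨fun hcc => absurd hcc hop, fun hcc => by omega⟩,
        fun _ => Or.inr ⟨rfl, hz⟩⟩
    · rw [if_neg hz]
      exact ⟨⟨fun hcc => absurd hcc hop, fun hcc => by omega⟩,
        fun _ => Or.inl rfl⟩

lemma recU_top (n : ℕ) (b c : Bool) (u' : ℕ → ℕ) :
    recU n b c u' (n+1) = (if b = true then n + 2 else 0) := by
  unfold recU
  rw [if_neg (by omega)]
  by_cases hbb : b = true
  · rw [if_pos ⟨rfl, hbb⟩, if_pos hbb]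
  · rw [if_neg (fun hcon => hbb hcon.2), if_neg hbb]

lemma recU_out (n : ℕ) (b c : Bool) (u' : ℕ → ℕ) {i : ℕ} (hi : i = 0 ∨ n + 1 < i) :
    recU n b c u' i = 0 := by
  unfold recU
  rw [if_neg (by omega), if_neg (by omega)]

lemma rec_mem (n h : ℕ) (b c : Bool) (u' w' : ℕ → ℕ) (j : ℕ)
    (hd : IsD n (h + (if c then 1 else 0) - (if b then 1 else 0)) u' w')
    (hbh : b = true → 1 ≤ h)
    (hj : j ≤ h - (if b then 1 else 0)) :
    IsD (n+1) h (recU n b c u') (recW n j w')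
    ∧ (recU n b c u' (n+1) = n + 2 ↔ b = true)
    ∧ ((∃ i, recU n b c u' i = 1) ↔ c = true) := by
  have hn2 : n + 1 + 1 = n + 2 := rfl
  have hrel := rec_rel n b c u'
  have hcard := hd.opens
  have hne : c = true → ((Finset.Icc 1 n).filter fun i => u' i = n + 1).Nonempty := by
    intro hcc
    rw [← Finset.card_pos, hcard, hcc]
    cases b with
    | false => simp
    | true =>
        have h1h := hbh rfl
        rw [if_pos rfl]
        omega
  have hmofacts : c = true → (1 ≤ mo n u' ∧ mo n u' ≤ n ∧ u' (mo n u') = n + 1) := by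
    intro hcc
    have := mo_mem (hne hcc)
    simp only [Finset.mem_filter, Finset.mem_Icc] at this
    exact ⟨this.1.1, this.1.2, this.2⟩
  have hco : ∀ i, 1 ≤ i → i ≤ n →
      (recU n b c u' i = n + 2 ↔ (u' i = n + 1 ∧ ¬(c = true ∧ i = mo n u'))) := by
    intro i h1 h2
    unfold recU
    rw [if_pos ⟨h1, h2⟩]
    by_cases hop : u' i = n + 1
    · rw [if_pos hop]
      by_cases hmo : c = true ∧ i = mo n u'
      · rw [if_pos hmo]
        constructor
        · intro hcc; omega
        · intro hcc; exact absurd hmo hcc.2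
      · rw [if_neg hmo]
        exact ⟨fun _ => ⟨hop, hmo⟩, fun _ => rfl⟩
    · rw [if_neg hop]
      by_cases hz : u' i = 0
      · rw [if_pos hz]
        exact ⟨fun hcc => by omega, fun hcc => absurd hcc.1 hop⟩
      · rw [if_neg hz]
        constructor
        · intro hcc
          exact absurd (by omega : u' i = n + 1) hop
        · intro hcc
          exact absurd hcc.1 hop
  have hclosed : ∀ i, 0 < recU n b c u' i → recU n b c u' i ≤ n + 1 - i →
      (1 ≤ i ∧ i ≤ n) ∧ ((c = true ∧ i = mo n u' ∧ recU n b c u' i = 1 ∧ u' i = n + 1)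
        ∨ (0 < u' i ∧ u' i ≤ n - i ∧ recU n b c u' i = u' i + 1)) := by
    intro i hpos hle
    by_cases hg : 1 ≤ i ∧ i ≤ n
    · refine ⟨hg, ?_⟩
      have hvals : recU n b c u' i
          = (if u' i = n + 1 then (if c = true ∧ i = mo n u' then 1 else n + 2)
             else if u' i = 0 then 0 else u' i + 1) := by
        unfold recU; rw [if_pos hg]
      by_cases hop : u' i = n + 1
      · rw [if_pos hop] at hvals
        by_cases hmo : c = true ∧ i = mo n u'
        · rw [if_pos hmo] at hvals
          exact Or.inl ⟨hmo.1, hmo.2, hvals, hop⟩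
        · rw [if_neg hmo] at hvals
          exfalso; omega
      · rw [if_neg hop] at hvals
        by_cases hz : u' i = 0
        · rw [if_pos hz] at hvals; exfalso; omega
        · rw [if_neg hz] at hvals
          exact Or.inr ⟨by omega, by omega, hvals⟩
    · exfalso
      rcases (by omega : i = 0 ∨ (n + 1 < i) ∨ i = n + 1) with hi | hi | hi
      · rw [recU_out n b c u' (Or.inl hi)] at hpos; omega
      · rw [recU_out n b c u' (Or.inr hi)] at hpos; omega
      · rw [hi, recU_top n b c u'] at hpos hle
        cases b
        · simp only [Bool.false_eq_true, if_false] at hpos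
          omega
        · rw [if_pos rfl] at hle
          omega
  have hopen : ∀ i, recU n b c u' i = n + 2 →
      ((1 ≤ i ∧ i ≤ n ∧ u' i = n + 1 ∧ ¬(c = true ∧ i = mo n u')) ∨ (i = n + 1 ∧ b = true)) := by
    intro i hval
    by_cases hg : 1 ≤ i ∧ i ≤ n
    · exact Or.inl ⟨hg.1, hg.2, ((hco i hg.1 hg.2).mp hval).1, ((hco i hg.1 hg.2).mp hval).2⟩
    · rcases (by omega : i = 0 ∨ (n + 1 < i) ∨ i = n + 1) with hi | hi | hi
      · rw [recU_out n b c u' (Or.inl hi)] at hval; omega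
      · rw [recU_out n b c u' (Or.inr hi)] at hval; omega
      · rw [hi, recU_top n b c u'] at hval
        refine Or.inr ⟨hi, ?_⟩
        cases b
        · simp at hval
        · rfl
  -- the opens count
  have hnm : (n+1) ∉ (Finset.Icc 1 n).filter fun i => recU n b c u' i = n + 2 := by
    simp
  have hinnercard : ((Finset.Icc 1 n).filter fun i => recU n b c u' i = n + 2).card
      = h - (if b = true then 1 else 0) := by
    by_cases hcc : c = true
    · have hinner : ((Finset.Icc 1 n).filter fun i => recU n b c u' i = n + 2)
          = ((Finset.Icc 1 n).filter fun i => u' i = n + 1).erase (mo n u') := by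
        ext i
        simp only [Finset.mem_filter, Finset.mem_erase, Finset.mem_Icc]
        constructor
        · rintro ⟨hic, hval⟩
          have := (hco i hic.1 hic.2).mp hval
          refine ⟨fun hcon => this.2 ⟨hcc, hcon⟩, hic, this.1⟩
        · rintro ⟨hmo, hic, hval⟩
          exact ⟨hic, (hco i hic.1 hic.2).mpr ⟨hval, fun hcon => hmo hcon.2⟩⟩
      have hmoin := mo_mem (hne hcc)
      rw [hinner, Finset.card_erase_of_mem hmoin, hcard, hcc]
      cases b with
      | false => simp
      | true =>
          have h1h := hbh rfl
          rw [if_pos rfl]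
          omega
    · have hinner : ((Finset.Icc 1 n).filter fun i => recU n b c u' i = n + 2)
          = (Finset.Icc 1 n).filter fun i => u' i = n + 1 := by
        apply Finset.filter_congr
        intro i hi
        simp only [Finset.mem_Icc] at hi
        rw [hco i hi.1 hi.2]
        constructor
        · exact fun hx => hx.1
        · exact fun hx => ⟨hx, fun hcon => hcc hcon.1⟩
      rw [hinner, hcard]
      have hc0 : c = false := Bool.eq_false_iff.mpr hcc
      rw [hc0]
      simp
  have hopens : ((Finset.Icc 1 (n+1)).filter fun i => recU n b c u' i = n + 2).card = h := by
    rw [Icc_succ_insert, Finset.filter_insert, recU_top n b c u']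
    cases b with
    | false =>
        rw [if_neg (by simp)]
        rw [hinnercard]
        simp
    | true =>
        rw [if_pos (by simp), Finset.card_insert_of_notMem hnm, hinnercard]
        have h1h := hbh rfl
        simp only [reduceIte]
        omega
  refine ⟨⟨?_, ?_, ?_, ?_, ?_, ?_, ?_⟩, ?_, ?_⟩
  · -- uzero
    intro i hi
    exact recU_out n b c u' hi
  · -- bound
    intro i h1 h2
    rcases (by omega : i ≤ n ∨ i = n + 1) with hi | hi
    · by_cases hop : u' i = n + 1
      · rcases ((hrel i h1 hi).1.mp hop) with hv | hv
        · left; omega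
        · right; omega
      · rcases (hrel i h1 hi).2 hop with hv | hv
        · have hb2 : u' i ≤ n - i ∨ u' i = n + 1 := hd.bound i h1 hi
          left; omega
        · left; omega
    · rw [hi, recU_top n b c u']
      cases b
      · left; simp
      · right; simp
  · -- opens
    simp only [hn2]
    exact hopens
  · -- decr
    intro i j hij h0i hbi h0j hbj
    obtain ⟨hig, hi⟩ := hclosed i h0i hbi
    obtain ⟨hjg, hj2⟩ := hclosed j h0j hbj
    rcases hi with hi | hi
    · rcases hj2 with hj2 | hj2
      · exfalso
        obtain ⟨-, hieq, -, -⟩ := hi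
        obtain ⟨-, hjeq, -, -⟩ := hj2
        omega
      · exfalso
        have := hd.before j (mo n u') hj2.1 hj2.2.1 (hmofacts hi.1).2.2
        obtain ⟨-, hieq, -, -⟩ := hi
        omega
    · rcases hj2 with hj2 | hj2
      · rw [hi.2.2, hj2.2.2.1]
        omega
      · have := hd.decr i j hij hi.1 hi.2.1 hj2.1 hj2.2.1
        rw [hi.2.2, hj2.2.2]
        omega
  · -- before
    intro i j h0i hbi hval
    have hval2 : recU n b c u' j = n + 2 := by omega
    obtain ⟨hig, hi⟩ := hclosed i h0i hbi
    rcases hopen j hval2 with hj2 | hj2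
    · rcases hi with hi | hi
      · -- i = mo, j another open
        have hjmem : j ∈ (Finset.Icc 1 n).filter fun i => u' i = n + 1 := by
          simp only [Finset.mem_filter, Finset.mem_Icc]
          exact ⟨⟨hj2.1, hj2.2.1⟩, hj2.2.2.1⟩
        have hle := mo_min (hne hi.1) hjmem
        have hjne : j ≠ mo n u' := fun hcon => hj2.2.2.2 ⟨hi.1, hcon⟩
        obtain ⟨-, hieq, -, -⟩ := hi
        omega
      · exact hd.before i j hi.1 hi.2.1 hj2.2.2.1
    · omega
  · -- wle
    intro k h1 h2
    rcases (by omega : k ≤ n ∨ k = n + 1) with hk | hk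
    · have hw : recW n j w' k = w' k := by
        unfold recW; rw [if_pos hk]
      rw [hw]
      have hcap : cap n u' k = cap (n+1) (recU n b c u') k := by
        apply cap_transport n k h1 hk
        intro i hi1 hi2
        exact hrel i hi1 (by omega)
      rw [← hcap]
      exact hd.wle k h1 hk
    · have hw : recW n j w' k = j := by
        unfold recW; rw [if_neg (by omega), if_pos hk]
      rw [hw, hk]
      have := cap_top n h (recU n b c u') hopens
      rw [this, recU_top n b c u']
      cases b
      · simpa using hj
      · simp only [if_pos rfl]
        simpa using hj
  · -- wzero
    intro k hk
    unfold recW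
    rcases hk with hk | hk
    · subst hk
      rw [if_pos (by omega)]
      exact hd.wzero 0 (Or.inl rfl)
    · rw [if_neg (by omega), if_neg (by omega)]
  · -- flag b
    rw [hn2, recU_top n b c u']
    cases b
    · simp
    · simp
  · -- flag c
    constructor
    · rintro ⟨i, hi⟩
      by_cases hg : 1 ≤ i ∧ i ≤ n
      · by_cases hop : u' i = n + 1
        · have hvals : recU n b c u' i
              = (if c = true ∧ i = mo n u' then 1 else n + 2) := by
            unfold recU; rw [if_pos hg, if_pos hop]
          by_cases hmo : c = true ∧ i = mo n u'
          · exact hmo.1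
          · exfalso; rw [if_neg hmo] at hvals; omega
        · exfalso
          have hvals : recU n b c u' i = (if u' i = 0 then 0 else u' i + 1) := by
            unfold recU; rw [if_pos hg, if_neg hop]
          by_cases hz : u' i = 0
          · rw [if_pos hz] at hvals; omega
          · rw [if_neg hz] at hvals; omega
      · exfalso
        rcases (by omega : i = 0 ∨ (n + 1 < i) ∨ i = n + 1) with hx | hx | hx
        · rw [recU_out n b c u' (Or.inl hx)] at hi; omega
        · rw [recU_out n b c u' (Or.inr hx)] at hi; omega
        · rw [hx, recU_top n b c u'] at hi
          cases b <;> simp at hi <;> omega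
    · intro hcc
      refine ⟨mo n u', ?_⟩
      obtain ⟨hm1, hm2, hm3⟩ := hmofacts hcc
      unfold recU
      rw [if_pos ⟨hm1, hm2⟩, if_pos hm3, if_pos ⟨hcc, rfl⟩]

lemma mo_strip (n h : ℕ) (u w : ℕ → ℕ) (hd : IsD (n+1) h u w) {p : ℕ} (hp : u p = 1) :
    mo n (stripU n u) = p := by
  have hpr := one_range n h u w hd hp
  have hrel := strip_rel n h u w hd
  have hpmem : p ∈ (Finset.Icc 1 n).filter fun i => stripU n u i = n + 1 := by
    simp only [Finset.mem_filter, Finset.mem_Icc]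
    exact ⟨hpr, (hrel p hpr.1 hpr.2).1.mpr (Or.inl hp)⟩
  have hne : ((Finset.Icc 1 n).filter fun i => stripU n u i = n + 1).Nonempty := ⟨p, hpmem⟩
  have h1 := mo_mem hne
  simp only [Finset.mem_filter, Finset.mem_Icc] at h1
  have h2 := (hrel (mo n (stripU n u)) h1.1.1 h1.1.2).1.mp h1.2
  rcases h2 with h2 | h2
  · exact one_unique n h u w hd h2 hp
  · exfalso
    have h3 := hd.before p (mo n (stripU n u)) (by omega) (by omega) (by omega)
    have h4 := mo_min hne hpmem
    omega

lemma rec_strip_u (n h : ℕ) (b c : Bool) (u w : ℕ → ℕ) (hd : IsD (n+1) h u w)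
    (hb : (u (n+1) = n + 2) ↔ b = true) (hc : (∃ i, u i = 1) ↔ c = true) :
    recU n b c (stripU n u) = u := by
  funext i
  have hrelf := strip_rel n h u w hd
  by_cases hg : 1 ≤ i ∧ i ≤ n
  · have hrel := hrelf i hg.1 hg.2
    unfold recU
    rw [if_pos hg]
    by_cases hsv : stripU n u i = n + 1
    · rw [if_pos hsv]
      rcases hrel.1.mp hsv with hv | hv
      · have hcc : c = true := hc.mp ⟨i, hv⟩
        rw [if_pos ⟨hcc, (mo_strip n h u w hd hv).symm⟩]
        omega
      · rw [if_neg ?_]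
        · omega
        · rintro ⟨hcc, hieq⟩
          obtain ⟨p, hp⟩ := hc.mpr hcc
          have := mo_strip n h u w hd hp
          rw [this] at hieq
          rw [hieq] at hv
          omega
    · rw [if_neg hsv]
      have h2 := hrel.2 hsv
      by_cases hz : stripU n u i = 0
      · rw [if_pos hz]
        omega
      · rw [if_neg hz]
        omega
  · by_cases hi1 : i = n + 1
    · unfold recU
      rw [if_neg (by omega)]
      rcases hd.bound (n+1) (by omega) le_rfl with hbv | hbv
      · have hb0 : ¬ b = true := by
          intro hcon
          have := hb.mpr hcon
          omega
        rw [if_neg (fun hcon => hb0 hcon.2), hi1]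
        omega
      · have : b = true := hb.mp (by omega)
        rw [if_pos ⟨hi1, this⟩, hi1]
        omega
    · unfold recU
      rw [if_neg hg, if_neg (fun hcon => hi1 hcon.1)]
      exact (hd.uzero i (by omega)).symm

lemma rec_strip_w (n h : ℕ) (u w : ℕ → ℕ) (hd : IsD (n+1) h u w) :
    recW n (w (n+1)) (stripW n w) = w := by
  funext k
  unfold recW stripW
  by_cases hk : k ≤ n
  · rw [if_pos hk, if_pos hk]
  · rw [if_neg hk]
    by_cases hk1 : k = n + 1
    · rw [if_pos hk1, hk1]
    · rw [if_neg hk1]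
      exact (hd.wzero k (by omega)).symm

lemma strip_rec_u (n h' : ℕ) (b c : Bool) (u' w' : ℕ → ℕ) (hd' : IsD n h' u' w') :
    stripU n (recU n b c u') = u' := by
  funext i
  unfold stripU
  by_cases hg : 1 ≤ i ∧ i ≤ n
  · rw [if_pos hg]
    have hvals : recU n b c u' i
        = (if u' i = n + 1 then (if c = true ∧ i = mo n u' then 1 else n + 2)
           else if u' i = 0 then 0 else u' i + 1) := by
      unfold recU; rw [if_pos hg]
    by_cases hop : u' i = n + 1
    · rw [if_pos hop] at hvals
      by_cases hmo : c = true ∧ i = mo n u'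
      · rw [if_pos hmo] at hvals
        rw [if_pos (Or.inl hvals)]
        omega
      · rw [if_neg hmo] at hvals
        rw [if_pos (Or.inr hvals)]
        omega
    · rw [if_neg hop] at hvals
      by_cases hz : u' i = 0
      · rw [if_pos hz] at hvals
        rw [if_neg (by omega)]
        omega
      · rw [if_neg hz] at hvals
        rw [if_neg (by omega)]
        omega
  · rw [if_neg hg]
    exact (hd'.uzero i (by omega)).symm

lemma strip_rec_w (n h' : ℕ) (j : ℕ) (u' w' : ℕ → ℕ) (hd' : IsD n h' u' w') :
    stripW n (recW n j w') = w' := by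
  funext k
  unfold stripW recW
  by_cases hk : k ≤ n
  · rw [if_pos hk, if_pos hk]
  · rw [if_neg hk]
    exact (hd'.wzero k (by omega)).symm

lemma recW_top (n : ℕ) (j : ℕ) (w' : ℕ → ℕ) : recW n j w' (n+1) = j := by
  unfold recW
  rw [if_neg (by omega), if_pos rfl]

def Piece (n h : ℕ) (b c : Bool) : Type :=
  {p : (ℕ → ℕ) × (ℕ → ℕ) // IsD (n+1) h p.1 p.2 ∧ ((p.1 (n+1) = n + 2) ↔ b = true)
    ∧ ((∃ i, p.1 i = 1) ↔ c = true)}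

def pieceEquiv (n h : ℕ) (b c : Bool) :
    Piece n h b c
    ≃ Fin (h + 1 - (if b = true then 1 else 0))
      × Dset n (h + (if c = true then 1 else 0) - (if b = true then 1 else 0)) where
  toFun x := by
    refine (⟨x.val.2 (n+1), ?_⟩, ⟨(stripU n x.val.1, stripW n x.val.2),
      strip_mem n h b c x.val.1 x.val.2 x.prop.1 x.prop.2.1 x.prop.2.2⟩)
    have hw := x.prop.1.wle (n+1) (by omega) le_rfl
    have hop2 : ((Finset.Icc 1 (n+1)).filter fun i => x.val.1 i = n + 2).card = h := by
      have := x.prop.1.opens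
      simpa using this
    have hcap := cap_top n h x.val.1 hop2
    have hbh := (opens_restrict n h x.val.1 hop2).2
    have hbiff := x.prop.2.1
    by_cases hbb : b = true
    · have h1h := hbh (hbiff.mpr hbb)
      have hi1 : (if x.val.1 (n+1) = n + 2 then (1:ℕ) else 0) = 1 := if_pos (hbiff.mpr hbb)
      have hi2 : (if b = true then (1:ℕ) else 0) = 1 := if_pos hbb
      omega
    · have hi1 : (if x.val.1 (n+1) = n + 2 then (1:ℕ) else 0) = 0 :=
        if_neg (fun hcon => hbb (hbiff.mp hcon))
      have hi2 : (if b = true then (1:ℕ) else 0) = 0 := if_neg hbb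
      omega
  invFun y := by
    refine ⟨(recU n b c y.2.val.1, recW n y.1.val y.2.val.2), ?_⟩
    have hisl : y.1.val < h + 1 - (if b = true then 1 else 0) := y.1.isLt
    have hbh : b = true → 1 ≤ h := by
      intro hbb
      have hi2 : (if b = true then (1:ℕ) else 0) = 1 := if_pos hbb
      omega
    have hj : y.1.val ≤ h - (if b = true then 1 else 0) := by
      by_cases hbb : b = true
      · have hi2 : (if b = true then (1:ℕ) else 0) = 1 := if_pos hbb
        omega
      · have hi2 : (if b = true then (1:ℕ) else 0) = 0 := if_neg hbb
        omega
    exact rec_mem n h b c y.2.val.1 y.2.val.2 y.1.val y.2.prop hbh hj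
  left_inv x := by
    apply Subtype.ext
    apply Prod.ext
    · exact rec_strip_u n h b c x.val.1 x.val.2 x.prop.1 x.prop.2.1 x.prop.2.2
    · exact rec_strip_w n h x.val.1 x.val.2 x.prop.1
  right_inv y := by
    apply Prod.ext
    · apply Fin.ext
      exact recW_top n y.1.val y.2.val.2
    · apply Subtype.ext
      apply Prod.ext
      · exact strip_rec_u n _ b c y.2.val.1 y.2.val.2 y.2.prop
      · exact strip_rec_w n _ y.1.val y.2.val.1 y.2.val.2 y.2.prop

lemma piece_card (n h : ℕ) (b c : Bool) :
    Nat.card (Piece n h b c)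
      = (h + 1 - (if b = true then 1 else 0))
        * Nat.card (Dset n (h + (if c = true then 1 else 0) - (if b = true then 1 else 0))) := by
  rw [Nat.card_congr (pieceEquiv n h b c), Nat.card_prod]
  congr 1
  rw [Nat.card_eq_fintype_card, Fintype.card_fin]

def dsetPieceEquiv (n h : ℕ) (b c : Bool)
    (P : Dset (n+1) h → Prop) (Q : Dset (n+1) h → Prop)
    (hP : ∀ x, P x ↔ ((x.val.1 (n+1) = n + 2) ↔ b = true))
    (hQ : ∀ x, Q x ↔ ((∃ i, x.val.1 i = 1) ↔ c = true)) :
    {y : {x : Dset (n+1) h // P x} // Q y.val} ≃ Piece n h b c where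
  toFun y := ⟨y.val.val.val, ⟨y.val.val.prop, (hP y.val.val).mp y.val.prop, (hQ y.val.val).mp y.prop⟩⟩
  invFun z := ⟨⟨⟨z.val, z.prop.1⟩, (hP ⟨z.val, z.prop.1⟩).mpr z.prop.2.1⟩,
               (hQ ⟨z.val, z.prop.1⟩).mpr z.prop.2.2⟩
  left_inv y := rfl
  right_inv z := rfl

lemma Dset_card_succ (n h : ℕ) :
    Nat.card (Dset (n+1) h) = (2*h+1) * Nat.card (Dset n h)
      + h * Nat.card (Dset n (h-1)) + (h+1) * Nat.card (Dset n (h+1)) := by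
  classical
  set Pb : Dset (n+1) h → Prop := fun x => x.val.1 (n+1) = n + 2 with hPb
  set Qc : Dset (n+1) h → Prop := fun x => ∃ i, x.val.1 i = 1 with hQc
  have hsplit : ∀ (P : Dset (n+1) h → Prop),
      Nat.card (Dset (n+1) h) = Nat.card {x : Dset (n+1) h // P x}
        + Nat.card {x : Dset (n+1) h // ¬ P x} := by
    intro P
    rw [← Nat.card_sum]
    exact Nat.card_congr (Equiv.sumCompl P).symm
  have hsplit2 : ∀ (P : Dset (n+1) h → Prop),
      Nat.card {x : Dset (n+1) h // P x}
        = Nat.card {y : {x : Dset (n+1) h // P x} // Qc y.val}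
          + Nat.card {y : {x : Dset (n+1) h // P x} // ¬ Qc y.val} := by
    intro P
    rw [← Nat.card_sum]
    exact Nat.card_congr (Equiv.sumCompl _).symm
  have c11 : Nat.card {y : {x : Dset (n+1) h // Pb x} // Qc y.val}
      = Nat.card (Piece n h true true) :=
    Nat.card_congr (dsetPieceEquiv n h true true Pb Qc
      (fun x => by simp [hPb]) (fun x => by simp [hQc]))
  have c10 : Nat.card {y : {x : Dset (n+1) h // Pb x} // ¬ Qc y.val}
      = Nat.card (Piece n h true false) :=
    Nat.card_congr (dsetPieceEquiv n h true false Pb (fun x => ¬ Qc x)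
      (fun x => by simp [hPb]) (fun x => by simp [hQc]))
  have c01 : Nat.card {y : {x : Dset (n+1) h // ¬ Pb x} // Qc y.val}
      = Nat.card (Piece n h false true) :=
    Nat.card_congr (dsetPieceEquiv n h false true (fun x => ¬ Pb x) Qc
      (fun x => by simp [hPb]) (fun x => by simp [hQc]))
  have c00 : Nat.card {y : {x : Dset (n+1) h // ¬ Pb x} // ¬ Qc y.val}
      = Nat.card (Piece n h false false) :=
    Nat.card_congr (dsetPieceEquiv n h false false (fun x => ¬ Pb x) (fun x => ¬ Qc x)
      (fun x => by simp [hPb]) (fun x => by simp [hQc]))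
  rw [hsplit Pb, hsplit2 Pb, hsplit2 (fun x => ¬ Pb x), c11, c10, c01, c00,
    piece_card, piece_card, piece_card, piece_card]
  simp only [reduceIte, Bool.false_eq_true, if_false, Nat.add_sub_cancel, Nat.sub_zero,
    Nat.add_zero]
  ring

lemma choose_identity (n h : ℕ) :
    (2*h+1) * (n.factorial * n.choose h) + h * (n.factorial * n.choose (h-1))
      + (h+1) * (n.factorial * n.choose (h+1))
    = (n+1).factorial * (n+1).choose h := by
  rcases h with _ | k
  · simp [Nat.factorial_succ, Nat.choose_one_right]
    ring
  · have e1 : n.choose (k+1) * (k+1) = n.choose k * (n - k) := Nat.choose_succ_right_eq n k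
    have e2 : n.choose (k+2) * (k+2) = n.choose (k+1) * (n - (k+1)) :=
      Nat.choose_succ_right_eq n (k+1)
    have pascal : (n+1).choose (k+1) = n.choose k + n.choose (k+1) := Nat.choose_succ_succ n k
    rcases le_or_gt (k+1) n with hle | hlt
    · rw [Nat.factorial_succ, pascal]
      simp only [Nat.add_sub_cancel]
      zify [hle, Nat.le_of_succ_le hle] at e1 e2 ⊢
      linear_combination (n.factorial : ℤ) * e1 + (n.factorial : ℤ) * e2
    · have z1 : n.choose (k+1) = 0 := Nat.choose_eq_zero_of_lt hlt
      have z2 : n.choose (k+2) = 0 := Nat.choose_eq_zero_of_lt (by omega)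
      rcases eq_or_lt_of_le (Nat.lt_succ_iff.mp hlt) with heq | hlt2
      · subst heq
        simp only [Nat.add_sub_cancel, z1, z2, Nat.choose_self, Nat.factorial_succ, pascal]
        ring
      · have z0 : n.choose k = 0 := Nat.choose_eq_zero_of_lt hlt2
        have z3 : (n+1).choose (k+1) = 0 := Nat.choose_eq_zero_of_lt (by omega)
        simp [z0, z1, z2, z3]

lemma Dset_card (n h : ℕ) : Nat.card (Dset n h) = n.factorial * n.choose h := by
  induction n generalizing h with
  | zero =>
      rw [Dset_card_zero]
      rcases h with _ | h <;> simp
  | succ n ih =>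
      rw [Dset_card_succ, ih, ih, ih, choose_identity]

lemma isD_zero_iff (n : ℕ) (u w : ℕ → ℕ) :
    IsD n 0 u w ↔ IsSubexc n u ∧ IsDecr n u ∧ IsValidW n u w := by
  constructor
  · intro d
    have hno : ∀ i, u i ≠ n + 1 := by
      intro i hi
      have hmem : i ∈ (Finset.Icc 1 n).filter fun i => u i = n + 1 := by
        have hi1 : 1 ≤ i := by
          by_contra hc
          have : u i = 0 := d.uzero i (by omega)
          omega
        have hi2 : i ≤ n := by
          by_contra hc
          have : u i = 0 := d.uzero i (by omega)
          omega
        simp [hi, hi1, hi2]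
      have := d.opens
      rw [Finset.card_eq_zero] at this
      rw [this] at hmem
      simp at hmem
    have hsub : IsSubexc n u := by
      refine ⟨fun j h1 h2 => ?_, d.uzero⟩
      rcases d.bound j h1 h2 with hb | hb
      · exact hb
      · exact absurd hb (hno j)
    refine ⟨hsub, ?_, ?_⟩
    · intro i j h1 hij hj hui huj
      refine d.decr i j hij hui ?_ huj (hsub.1 j (by omega) hj)
      exact hsub.1 i h1 (by omega)
    · refine ⟨fun k h1 h2 => ?_, d.wzero⟩
      rw [← cap_eq_maxW n u k h2 (fun i hi1 hi2 => hno i)]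
      exact d.wle k h1 h2
  · rintro ⟨hsub, hdecr, hw⟩
    constructor
    · exact hsub.2
    · intro i h1 h2; exact Or.inl (hsub.1 i h1 h2)
    · rw [Finset.card_eq_zero, Finset.filter_eq_empty_iff]
      intro i hi
      simp only [Finset.mem_Icc] at hi
      have := hsub.1 i hi.1 hi.2
      omega
    · intro i j hij hui _ huj hj2
      have hi1 : 1 ≤ i := by
        by_contra hc
        have : u i = 0 := hsub.2 i (by omega)
        omega
      have hjn : j ≤ n := by
        by_contra hc
        have : u j = 0 := hsub.2 j (by omega)
        omega
      exact hdecr i j hi1 hij hjn hui huj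
    · intro i j _ _ huj
      have hj1 : 1 ≤ j := by
        by_contra hc
        have : u j = 0 := hsub.2 j (by omega)
        omega
      have hjn : j ≤ n := by
        by_contra hc
        have : u j = 0 := hsub.2 j (by omega)
        omega
      have := hsub.1 j hj1 hjn
      omega
    · intro k h1 h2
      have hno : ∀ i, 1 ≤ i → i ≤ n → u i ≠ n + 1 := by
        intro i hi1 hi2
        have := hsub.1 i hi1 hi2
        omega
      rw [cap_eq_maxW n u k h2 hno]
      exact hw.1 k h1 h2
    · exact hw.2

def dwsf_equiv (n : ℕ) :
    {p : (ℕ → ℕ) × (ℕ → ℕ) //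
      IsSubexc n p.1 ∧ IsDecr n p.1 ∧ IsValidW n p.1 p.2} ≃ Dset n 0 where
  toFun x := ⟨x.val, (isD_zero_iff n x.val.1 x.val.2).mpr x.prop⟩
  invFun x := ⟨x.val, (isD_zero_iff n x.val.1 x.val.2).mp x.prop⟩
  left_inv x := rfl
  right_inv x := rfl

/-- The number of decreasing weighted subexcedent functions of size `n` is `n!`. -/
theorem card_dwsf (n : ℕ) :
    Nat.card {p : (ℕ → ℕ) × (ℕ → ℕ) //
      IsSubexc n p.1 ∧ IsDecr n p.1 ∧ IsValidW n p.1 p.2} = n.factorial := by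
  rw [Nat.card_congr (dwsf_equiv n), Dset_card, Nat.choose_zero_right, mul_one]
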